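/- Let E be a locally compact, second-countable Hausdorff topological space. For n ≥ 0 let x_n : [0,∞) → [0,∞) be nondecreasing functions with x_n(0) = 0 and x_n(t) → ∞ as t → ∞, such that x_0 is continuous and x_n → x_0 uniformly on compact subsets of [0,∞). Let (m_n)_{n≥0} be Radon measures on [0,∞) × E such that m_n → m_0 vaguely, i.e., ∫ g dm_n → ∫ g dm_0 for every continuous compactly supported g : [0,∞)×E → [0,∞). Then for every continuous compactly supported f : [0,∞) × E → [0,∞), ∫ f(x_n(u), v) m_n(du, dv) → ∫ f(x_0(u), v) m_0(du, dv) as n → ∞. (This is the continuity, at points (x, m) with x continuous, of the time-change map T₁m(f) = ∬ f(x(u), v) m(du, dv); for nondecreasing functions with continuous limit, Skorokhod convergence coincides with locally uniform convergence.) -/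

import Mathlib

open MeasureTheory Filter Set Topology
open scoped NNReal ENNReal

/-- Auxiliary integrability lemma: a bounded measurable function vanishing outside a set of
finite measure is integrable. -/
lemma integrable_aux13 {α : Type*} [MeasurableSpace α] {μ : Measure α} {F : α → ℝ}
    {C : Set α} (hmeas : Measurable F) (hCm : MeasurableSet C) (hμ : μ C ≠ ⊤)
    {Mf : ℝ} (hbd : ∀ p, |F p| ≤ Mf) (hsupp : ∀ p ∉ C, F p = 0) : Integrable F μ := by
  have hFi : F = C.indicator F := by
    ext p
    by_cases hp : p ∈ C
    · simp [Set.indicator, hp]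
    · simp [Set.indicator, hp, hsupp p hp]
  rw [hFi, integrable_indicator_iff hCm]
  exact Measure.integrableOn_of_bounded hμ hmeas.aestronglyMeasurable
    (ae_of_all _ fun p => by simpa [Real.norm_eq_abs] using hbd p)

/-- **Lemma 4.1 of Resnick–Zeber (continuity of the time-change map).**
Let `E` be a locally compact, second-countable Hausdorff space.  For `n ≥ 0` let
`x_n : [0,∞) → [0,∞)` be nondecreasing with `x_n(0) = 0` and `x_n(t) → ∞`, such that `x_0`
is continuous and `x_n → x_0` uniformly on compacts, and let `(m_n)` be Radon measures on
`[0,∞) × E` with `m_n → m_0` vaguely.  Then for every nonnegative continuous compactly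
supported `f` on `[0,∞) × E`,
`∫ f(x_n(u), v) m_n(du, dv) → ∫ f(x_0(u), v) m_0(du, dv)` as `n → ∞`. -/
theorem statement13 {E : Type*} [TopologicalSpace E] [LocallyCompactSpace E]
    [SecondCountableTopology E] [T2Space E] [MeasurableSpace E] [BorelSpace E]
    (x : ℕ → ℝ≥0 → ℝ≥0)
    (hmono : ∀ n, Monotone (x n)) (hzero : ∀ n, x n 0 = 0)
    (hinf : ∀ n, Tendsto (x n) atTop atTop)
    (hcont : Continuous (x 0))
    (hunif : ∀ C : Set ℝ≥0, IsCompact C → TendstoUniformlyOn (fun n => x n) (x 0) atTop C)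
    (m : ℕ → Measure (ℝ≥0 × E))
    (hradon : ∀ n, ∀ C : Set (ℝ≥0 × E), IsCompact C → m n C < ⊤)
    (hvague : ∀ g : ℝ≥0 × E → ℝ, Continuous g → HasCompactSupport g → (∀ p, 0 ≤ g p) →
      Tendsto (fun n => ∫ p, g p ∂(m n)) atTop (𝓝 (∫ p, g p ∂(m 0))))
    (f : ℝ≥0 × E → ℝ) (hf : Continuous f) (hfc : HasCompactSupport f)
    (hfpos : ∀ p, 0 ≤ f p) :
    Tendsto (fun n => ∫ p, f (x n p.1, p.2) ∂(m n)) atTop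
      (𝓝 (∫ p, f (x 0 p.1, p.2) ∂(m 0))) := by
  letI : MetricSpace E := TopologicalSpace.metrizableSpaceMetric E
  haveI : ∀ n, IsFiniteMeasureOnCompacts (m n) := fun n => ⟨fun _ hK => hradon n _ hK⟩
  -- a bound on the support of `f` in the first coordinate
  obtain ⟨B, hB⟩ : ∃ B : ℝ≥0, ∀ p ∈ tsupport f, p.1 ≤ B := by
    obtain ⟨B, hB⟩ := (hfc.image continuous_fst).bddAbove
    exact ⟨B, fun p hp => hB (Set.mem_image_of_mem _ hp)⟩
  -- the projection of the support of `f` on `E`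
  set K2 : Set E := Prod.snd '' tsupport f with hK2def
  have hK2 : IsCompact K2 := hfc.image continuous_snd
  -- a time `T` after which `x 0` stays above `B + 1`
  obtain ⟨T, hT⟩ : ∃ T : ℝ≥0, ∀ u ≥ T, B + 1 ≤ x 0 u :=
    ((hinf 0).eventually_ge_atTop (B + 1)).exists_forall_of_atTop
  -- the common compact set
  set C : Set (ℝ≥0 × E) := Set.Icc 0 T ×ˢ K2 with hCdef
  have hCcomp : IsCompact C := isCompact_Icc.prod hK2
  have hCmeas : MeasurableSet C := hCcomp.isClosed.measurableSet
  -- a bound on `f`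
  obtain ⟨Mf, hMf⟩ := hfc.exists_bound_of_continuous hf
  have hMf' : ∀ q, |f q| ≤ Mf := fun q => by simpa [Real.norm_eq_abs] using hMf q
  -- the limiting integrand
  set g : ℝ≥0 × E → ℝ := fun p => f (x 0 p.1, p.2) with hgdef
  have hgcont : Continuous g := hf.comp ((hcont.comp continuous_fst).prodMk continuous_snd)
  have hgzero : ∀ p : ℝ≥0 × E, p ∉ C → g p = 0 := by
    intro p hp
    by_contra hne
    have hmem : (x 0 p.1, p.2) ∈ tsupport f := subset_tsupport f hne
    apply hp
    constructor
    · refine ⟨zero_le, ?_⟩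
      by_contra hle
      push_neg at hle
      have h1 : x 0 p.1 ≤ B := hB _ hmem
      have h2 : B + 1 ≤ x 0 p.1 := hT p.1 hle.le
      exact absurd (le_trans h2 h1) (not_le.mpr (lt_add_one B))
    · exact ⟨(x 0 p.1, p.2), hmem, rfl⟩
  have hgsupp : HasCompactSupport g := by
    apply HasCompactSupport.intro hCcomp hgzero
  have hgpos : ∀ p, 0 ≤ g p := fun p => hfpos _
  -- measurability of the integrands
  have hFmeas : ∀ n, Measurable fun p : ℝ≥0 × E => f (x n p.1, p.2) := fun n =>
    hf.measurable.comp (((hmono n).measurable.comp measurable_fst).prodMk measurable_snd)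
  -- Urysohn function dominating the indicator of `C`
  obtain ⟨h, hh1, -, hhsupp, hhmem⟩ :=
    exists_continuous_one_zero_of_isCompact hCcomp isClosed_empty (disjoint_empty C)
  have hhcont : Continuous h := h.continuous
  have hhpos : ∀ p, 0 ≤ h p := fun p => (hhmem p).1
  have hhint : ∀ n, Integrable (fun p => h p) (m n) := fun n =>
    hhcont.integrable_of_hasCompactSupport hhsupp
  -- the uniform (in `n`) bound on `m n C`
  set I : ℝ := ∫ p, h p ∂(m 0) with hIdef
  have hInn : 0 ≤ I := integral_nonneg hhpos
  set M : ℝ := I + 1 with hMdef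
  have hMpos : (0 : ℝ) < M := by linarith
  have hIbound : ∀ᶠ n in atTop, ∫ p, h p ∂(m n) ≤ M :=
    (hvague (fun p => h p) hhcont hhsupp hhpos).eventually_le_const (by linarith)
  have hmC : ∀ n, ∫ p, h p ∂(m n) ≤ M → ((m n) C).toReal ≤ M := by
    intro n hn
    refine le_trans ?_ hn
    have hind : Integrable (C.indicator fun _ => (1 : ℝ)) (m n) :=
      (integrable_indicator_iff hCmeas).2 (integrableOn_const (hradon n C hCcomp).ne (by simp))
    have : ∫ p, C.indicator (fun _ => (1 : ℝ)) p ∂(m n) ≤ ∫ p, h p ∂(m n) := by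
      refine integral_mono hind (hhint n) fun p => ?_
      by_cases hp : p ∈ C
      · have h1p := hh1 hp
        simp only [Pi.one_apply] at h1p
        simp [Set.indicator, hp, h1p]
      · simpa [Set.indicator, hp] using hhpos p
    rw [integral_indicator_const _ hCmeas] at this
    simp at this; exact this
  -- integrability of `g`
  have hgint : ∀ n, Integrable g (m n) := fun n =>
    hgcont.integrable_of_hasCompactSupport hgsupp
  -- main step : the difference of integrals tends to zero
  have key : Tendsto (fun n => (∫ p, f (x n p.1, p.2) ∂(m n)) - ∫ p, g p ∂(m n))
      atTop (𝓝 0) := by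
    rw [NormedAddCommGroup.tendsto_nhds_zero]
    intro ε hε
    set ε' : ℝ := ε / (2 * M) with hε'def
    have hε'pos : 0 < ε' := div_pos hε (by linarith)
    -- `f` is uniformly continuous
    have hfu : UniformContinuous f := hfc.uniformContinuous_of_continuous hf
    obtain ⟨δ, hδpos, hδ⟩ := Metric.uniformContinuous_iff.mp hfu ε' hε'pos
    set ε₀ : ℝ := min δ (1 / 2) with hε₀def
    have hε₀pos : 0 < ε₀ := lt_min hδpos (by norm_num)
    have hA1 : ∀ᶠ n in atTop, ∀ u ∈ Set.Icc (0 : ℝ≥0) T, dist (x 0 u) (x n u) < ε₀ :=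
      Metric.tendstoUniformlyOn_iff.mp (hunif (Set.Icc 0 T) isCompact_Icc) ε₀ hε₀pos
    filter_upwards [hA1, hIbound] with n hn hnI
    -- for this `n`, the support of the time-changed integrand is inside `C`
    have hxnT : (B : ℝ) < (x n T : ℝ) := by
      have h1 : dist (x 0 T) (x n T) < ε₀ := hn T ⟨zero_le, le_rfl⟩
      have h2 : (B : ℝ) + 1 ≤ (x 0 T : ℝ) := by
        exact_mod_cast hT T le_rfl
      have h3 : |((x 0 T : ℝ)) - (x n T : ℝ)| < ε₀ := by
        rw [NNReal.dist_eq] at h1; exact h1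
      have h4 : ε₀ ≤ 1 / 2 := min_le_right _ _
      have := abs_lt.mp h3
      linarith [this.1, this.2]
    have hFzero : ∀ p : ℝ≥0 × E, p ∉ C → f (x n p.1, p.2) = 0 := by
      intro p hp
      by_contra hne
      have hmem : (x n p.1, p.2) ∈ tsupport f := subset_tsupport f hne
      apply hp
      constructor
      · refine ⟨zero_le, ?_⟩
        by_contra hle
        push_neg at hle
        have h1 : x n p.1 ≤ B := hB _ hmem
        have h2 : x n T ≤ x n p.1 := hmono n hle.le
        have : (x n T : ℝ) ≤ B := by exact_mod_cast le_trans h2 h1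
        linarith
      · exact ⟨(x n p.1, p.2), hmem, rfl⟩
    -- integrability of the time-changed integrand
    have hFint : Integrable (fun p : ℝ≥0 × E => f (x n p.1, p.2)) (m n) :=
      integrable_aux13 (hFmeas n) hCmeas (hradon n C hCcomp).ne
        (fun p => hMf' _) hFzero
    rw [← integral_sub hFint (hgint n)]
    have hptwise : ∀ p : ℝ≥0 × E,
        ‖f (x n p.1, p.2) - g p‖ ≤ C.indicator (fun _ => ε') p := by
      intro p
      by_cases hp : p ∈ C
      · have hd : dist ((x n p.1, p.2) : ℝ≥0 × E) (x 0 p.1, p.2) < δ := by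
          rw [Prod.dist_eq]
          have h1 : dist (x 0 p.1) (x n p.1) < ε₀ := hn p.1 hp.1
          have : dist (x n p.1) (x 0 p.1) < δ :=
            lt_of_lt_of_le (by rwa [dist_comm]) (min_le_left _ _)
          simp [this.le, max_lt this (by positivity)]
          exact this
        have := hδ hd
        rw [Real.dist_eq] at this
        simpa [Set.indicator, hp, hgdef, Real.norm_eq_abs] using this.le
      · simp [Set.indicator, hp, hFzero p hp, hgzero p hp]
    have hindint : Integrable (C.indicator fun _ => ε') (m n) :=
      (integrable_indicator_iff hCmeas).2 (integrableOn_const (hradon n C hCcomp).ne (by simp))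
    calc ‖∫ p, (f (x n p.1, p.2) - g p) ∂(m n)‖
        ≤ ∫ p, ‖f (x n p.1, p.2) - g p‖ ∂(m n) := norm_integral_le_integral_norm _
      _ ≤ ∫ p, C.indicator (fun _ => ε') p ∂(m n) :=
          integral_mono (hFint.sub (hgint n)).norm hindint hptwise
      _ = ((m n) C).toReal * ε' := by
          rw [integral_indicator_const _ hCmeas]; simp [smul_eq_mul, Measure.real]
      _ ≤ M * ε' := by
          exact mul_le_mul_of_nonneg_right (hmC n hnI) hε'pos.le
      _ < ε := by
          have h5 : M * ε' = ε / 2 := by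
            rw [hε'def]
            field_simp
          rw [h5]; linarith
  have h2 := hvague g hgcont hgsupp hgpos
  have := key.add h2
  simpa using this
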